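/- Let G be a bipartite graph with bipartition (X,Y) containing no cycle of length at least 2t (t ≥ 2), and let P = u₁u₂⋯u_s be a Hamilton path of G (so V(P) = V(G)). Then d(u₂, G) ≤ t and d(u_{s−1}, G) ≤ t. -/

import Mathlib

open SimpleGraph

private lemma aux_getVert_eq_getElem {V : Type*} {G : SimpleGraph V} :
    ∀ {a b : V} (q : G.Walk a b) (i : ℕ) (hi : i ≤ q.length),
      q.getVert i = q.support[i]'(by rw [Walk.length_support]; omega) := by
  intro a b q
  induction q with
  | nil =>
    intro i hi
    simp only [Walk.length_nil, Nat.le_zero] at hi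
    subst hi; simp
  | cons h q ih =>
    intro i hi
    cases i with
    | zero => simp
    | succ j =>
      simp only [Walk.getVert_cons_succ, Walk.support_cons, List.getElem_cons_succ]
      exact ih j (by simpa using hi)

private lemma aux_exists_drop {V : Type*} {G : SimpleGraph V} :
    ∀ {a b : V} (q : G.Walk a b) (i : ℕ), i ≤ q.length →
      ∃ r : G.Walk (q.getVert i) b, r.support = q.support.drop i ∧
        ∀ k, r.getVert k = q.getVert (i + k) := by
  intro a b q
  induction q with
  | nil =>
    intro i hi
    simp only [Walk.length_nil, Nat.le_zero] at hi
    subst hi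
    exact ⟨Walk.nil.copy (Walk.getVert_zero _).symm rfl, by simp, by simp⟩
  | cons h q ih =>
    intro i hi
    cases i with
    | zero =>
      refine ⟨(Walk.cons h q).copy (Walk.getVert_zero _).symm rfl, by simp, by simp⟩
    | succ j =>
      obtain ⟨r, hs, hg⟩ := ih j (by simpa using hi)
      refine ⟨r, by simpa using hs, ?_⟩
      intro k
      have h2 : (Walk.cons h q).getVert (j + 1 + k) = q.getVert (j + k) := by
        rw [show j + 1 + k = (j + k) + 1 by omega]
        exact Walk.getVert_cons_succ q h
      rw [h2]
      exact hg k

private lemma aux_exists_take {V : Type*} {G : SimpleGraph V} :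
    ∀ {a b : V} (q : G.Walk a b) (i : ℕ), i ≤ q.length →
      ∃ r : G.Walk a (q.getVert i), r.support = q.support.take (i + 1) ∧
        r.length = i ∧ ∀ k, k ≤ i → r.getVert k = q.getVert k := by
  intro a b q
  induction q with
  | nil =>
    intro i hi
    simp only [Walk.length_nil, Nat.le_zero] at hi
    subst hi
    refine ⟨Walk.nil.copy rfl (Walk.getVert_zero _).symm, by simp, by simp, ?_⟩
    intro k hk
    simp only [Nat.le_zero] at hk
    subst hk; simp
  | cons h q ih =>
    intro i hi
    cases i with
    | zero =>
      refine ⟨Walk.nil.copy rfl (Walk.getVert_zero _).symm, by simp, by simp, ?_⟩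
      intro k hk
      simp only [Nat.le_zero] at hk
      subst hk; simp
    | succ j =>
      obtain ⟨r, hs, hl, hg⟩ := ih j (by simpa using hi)
      refine ⟨Walk.cons h r, by simp [hs], by simp [hl], ?_⟩
      intro k hk
      cases k with
      | zero => simp
      | succ m =>
        simp only [Walk.getVert_cons_succ]
        exact hg m (by omega)

private lemma aux_edge_start {V : Type*} {G : SimpleGraph V} :
    ∀ {a b x : V} (r : G.Walk a b), r.IsPath → s(a, x) ∈ r.edges → x = r.getVert 1 := by
  intro a b x r hr he
  cases r with
  | nil => simp at he
  | cons h r =>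
    rw [Walk.edges_cons, List.mem_cons] at he
    rcases he with he | he
    · rw [Sym2.eq_iff] at he
      rcases he with ⟨-, hx⟩ | ⟨hac, hx⟩
      · simp [hx, Walk.getVert_cons_succ]
      · exact absurd hac h.ne
    · exfalso
      have := Walk.fst_mem_support_of_mem_edges r he
      rw [Walk.cons_isPath_iff] at hr
      exact hr.2 this

private lemma aux_flip {V : Type*} {G : SimpleGraph V} {X Y : Finset V}
    (hdisj : Disjoint X Y)
    (hbip : ∀ a b, G.Adj a b → (a ∈ X ∧ b ∈ Y) ∨ (a ∈ Y ∧ b ∈ X))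
    {a c : V} (h : G.Adj a c) : c ∈ X ↔ a ∉ X := by
  rcases hbip a c h with ⟨ha, hc⟩ | ⟨ha, hc⟩
  · exact ⟨fun hcx => absurd hc (Finset.disjoint_left.mp hdisj hcx),
      fun hna => absurd ha hna⟩
  · exact ⟨fun _ hax => Finset.disjoint_left.mp hdisj hax ha, fun _ => hc⟩

private lemma aux_parity {V : Type*} {G : SimpleGraph V} {X Y : Finset V}
    (hdisj : Disjoint X Y)
    (hbip : ∀ a b, G.Adj a b → (a ∈ X ∧ b ∈ Y) ∨ (a ∈ Y ∧ b ∈ X))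
    {a b : V} (q : G.Walk a b) :
    ∀ (i : ℕ), i ≤ q.length → (q.getVert i ∈ X ↔ (a ∈ X ↔ Even i)) := by
  intro i
  induction i with
  | zero => intro _; simp
  | succ j ih =>
    intro hi
    have hadj : G.Adj (q.getVert j) (q.getVert (j + 1)) :=
      q.adj_getVert_succ (by omega)
    have hflip := aux_flip hdisj hbip hadj
    have hj := ih (by omega)
    rw [hflip, hj, Nat.even_add_one]
    tauto

private lemma aux_key {V : Type*} [Fintype V] [DecidableEq V]
    (G : SimpleGraph V) [DecidableRel G.Adj]
    (X Y : Finset V) (hdisj : Disjoint X Y)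
    (hbip : ∀ a b, G.Adj a b → (a ∈ X ∧ b ∈ Y) ∨ (a ∈ Y ∧ b ∈ X))
    (t : ℕ) (ht : 2 ≤ t)
    (hnocycle : ∀ (w : V) (c : G.Walk w w), c.IsCycle → c.length < 2 * t)
    {a b : V} (p : G.Walk a b) (hp : p.IsPath) (hham : p.IsHamiltonian) :
    ∀ w, p.support[1]? = some w → G.degree w ≤ t := by
  intro w hw
  rw [List.getElem?_eq_some_iff] at hw
  obtain ⟨hlt, hw⟩ := hw
  rw [Walk.length_support] at hlt
  have h1le : 1 ≤ p.length := by omega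
  have hw1 : p.getVert 1 = w := by
    rw [aux_getVert_eq_getElem p 1 h1le]; exact hw
  subst hw1
  have hnodup : p.support.Nodup := hp.support_nodup
  have hinj : ∀ m n, m ≤ p.length → n ≤ p.length → p.getVert m = p.getVert n → m = n := by
    intro m n hm hn hmn
    rw [aux_getVert_eq_getElem p m hm, aux_getVert_eq_getElem p n hn] at hmn
    exact hnodup.getElem_inj_iff.mp hmn
  rw [← SimpleGraph.card_neighborFinset_eq_degree]
  have hsub : G.neighborFinset (p.getVert 1) ⊆
      (Finset.range t).image (fun k => p.getVert (2 * k)) := by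
    intro v hv
    have hadj : G.Adj (p.getVert 1) v := (SimpleGraph.mem_neighborFinset _ _ _).mp hv
    obtain ⟨i, hvi, hi⟩ := Walk.mem_support_iff_exists_getVert.mp (hham.mem_support v)
    have hEv : Even i := by
      have h1 := aux_parity hdisj hbip p 1 h1le
      have h2 := aux_parity hdisj hbip p i hi
      have h3 : v ∈ X ↔ p.getVert 1 ∉ X := aux_flip hdisj hbip hadj
      rw [hvi] at h2
      have hne1 : ¬ Even 1 := by simp
      tauto
    have hilt : i < 2 * t := by
      by_cases hcase : i ≤ 2
      · omega
      · have hi4 : 4 ≤ i := by obtain ⟨m, hm⟩ := hEv; omega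
        obtain ⟨r1, hs1, hg1⟩ := aux_exists_drop p 1 h1le
        have hlen1 : r1.length = p.length - 1 := by
          have := congrArg List.length hs1
          rw [Walk.length_support, List.length_drop, Walk.length_support] at this
          omega
        obtain ⟨r, hs, hrlen, hrg⟩ := aux_exists_take r1 (i - 1) (by omega)
        have hend : r1.getVert (i - 1) = v := by
          rw [hg1, show 1 + (i - 1) = i by omega, hvi]
        have hrpath : r.IsPath := by
          rw [Walk.isPath_def, hs, hs1]
          exact hnodup.sublist ((List.take_sublist _ _).trans (List.drop_sublist _ _))
        have hredges : s(p.getVert 1, v) ∉ r.edges := by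
          intro hmem
          have hveq : v = r.getVert 1 := aux_edge_start r hrpath hmem
          have hr1 : r.getVert 1 = p.getVert 2 := by
            rw [hrg 1 (by omega), hg1]
          rw [hr1] at hveq
          have := hinj i 2 hi (by omega) (by rw [hvi, hveq])
          omega
        have hc : (Walk.cons hadj ((r.copy rfl hend).reverse)).IsCycle := by
          rw [Walk.cons_isCycle_iff]
          constructor
          · rw [Walk.isPath_reverse_iff, Walk.isPath_copy]
            exact hrpath
          · rw [Walk.edges_reverse, List.mem_reverse, Walk.edges_copy]
            exact hredges
        have := hnocycle _ _ hc
        simp only [Walk.length_cons, Walk.length_reverse, Walk.length_copy] at this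
        omega
    rw [Finset.mem_image]
    obtain ⟨m, hm⟩ := hEv
    exact ⟨m, Finset.mem_range.mpr (by omega), by rw [show 2 * m = i by omega, hvi]⟩
  calc (G.neighborFinset (p.getVert 1)).card
      ≤ ((Finset.range t).image (fun k => p.getVert (2 * k))).card :=
        Finset.card_le_card hsub
    _ ≤ (Finset.range t).card := Finset.card_image_le
    _ = t := Finset.card_range t

/-- Let G be bipartite with no cycle of length at least 2t (t ≥ 2) and
let P = u₁u₂⋯u_s be a Hamilton path of G. Then d(u₂,G) ≤ t and d(u_{s−1},G) ≤ t
(u₂ is the second vertex of P and u_{s−1} the second vertex of the reversed path). -/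
theorem hamilton_path_second_vertex_degree {V : Type*} [Fintype V] [DecidableEq V]
    (G : SimpleGraph V) [DecidableRel G.Adj]
    (X Y : Finset V) (hdisj : Disjoint X Y) (hcover : X ∪ Y = Finset.univ)
    (hbip : ∀ a b, G.Adj a b → (a ∈ X ∧ b ∈ Y) ∨ (a ∈ Y ∧ b ∈ X))
    (t : ℕ) (ht : 2 ≤ t)
    (hnocycle : ∀ (w : V) (c : G.Walk w w), c.IsCycle → c.length < 2 * t)
    {u₁ uₛ : V} (p : G.Walk u₁ uₛ) (hp : p.IsPath) (hham : p.IsHamiltonian) :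
    (∀ w, p.support[1]? = some w → G.degree w ≤ t) ∧
    (∀ w, p.reverse.support[1]? = some w → G.degree w ≤ t) := by
  have hham' : p.reverse.IsHamiltonian := by
    intro v
    rw [Walk.support_reverse, List.count_reverse]
    exact hham v
  exact ⟨aux_key G X Y hdisj hbip t ht hnocycle p hp hham,
    aux_key G X Y hdisj hbip t ht hnocycle p.reverse hp.reverse hham'⟩
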